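/- Assume Condition (*). Then every vertex v of G is incident to at most two red edges and at most two blue edges under c. Moreover, if v is incident to two red edges, then there is a drum of G containing both of these edges all four of whose edges are red; and likewise with blue in place of red. -/
import Mathlib
set_option linter.unusedSectionVars false
set_option maxHeartbeats 1000000


/-- A perfect matching of `G`: a set of edges of `G` such that every vertex
lies in exactly one edge of the set. -/
def IsPerfectMatching {V : Type*} (G : SimpleGraph V) (M : Set (Sym2 V)) : Prop :=
  M ⊆ G.edgeSet ∧ ∀ v : V, ∃! e : Sym2 V, e ∈ M ∧ v ∈ e

/-- `c` is a PMValid `k`-edge-colouring of `G`: it colours the edges of `G` with colours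
in `{1, …, k}`, every perfect matching of `G` is monochromatic under `c`, and every
colour class contains a perfect matching. -/
def PMValid {V : Type*} (G : SimpleGraph V) (c : Sym2 V → ℕ) (k : ℕ) : Prop :=
  (∀ e ∈ G.edgeSet, c e ∈ Finset.Icc 1 k) ∧
  (∀ M : Set (Sym2 V), IsPerfectMatching G M → ∀ e ∈ M, ∀ e' ∈ M, c e = c e') ∧
  (∀ i ∈ Finset.Icc 1 k, ∃ M : Set (Sym2 V), IsPerfectMatching G M ∧ ∀ e ∈ M, c e = i)

/-- `G` is matching covered: every edge lies in some perfect matching. -/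
def MatchingCovered {V : Type*} (G : SimpleGraph V) : Prop :=
  ∀ e ∈ G.edgeSet, ∃ M : Set (Sym2 V), IsPerfectMatching G M ∧ e ∈ M

/-- `e` is a C-edge: an edge of the distinguished Hamiltonian cycle `0, 1, …, 2n-1`
on `ZMod (2n)`, i.e. `e = {i, i+1}` for some `i`. -/
def IsCEdge (n : ℕ) (e : Sym2 (ZMod (2 * n))) : Prop :=
  ∃ i : ZMod (2 * n), e = s(i, i + 1)

/-- `e` is a legal edge: it joins two vertices of the same parity
(the parity of the residue is well defined since the modulus `2n` is even). -/
def IsLegal (n : ℕ) (e : Sym2 (ZMod (2 * n))) : Prop :=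
  ∃ a b : ZMod (2 * n), e = s(a, b) ∧ a.val % 2 = b.val % 2

/-- `k` lies on the arc strictly between `i` and `j` in clockwise (increasing) order,
i.e. `k ∈ {i+1, i+2, …, j-1}`. -/
def InArc (n : ℕ) (i j k : ZMod (2 * n)) : Prop :=
  0 < (k - i).val ∧ (k - i).val < (j - i).val

/-- Edges `e = {a, b}` and `e'` cross: `e'` has one endpoint in `P(e)` (the arc strictly
between `a` and `b`) and its other endpoint in `P'(e)` (the arc strictly between `b` and `a`). -/
def Crosses (n : ℕ) (e e' : Sym2 (ZMod (2 * n))) : Prop :=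
  ∃ a b x y : ZMod (2 * n), e = s(a, b) ∧ e' = s(x, y) ∧ InArc n a b x ∧ InArc n b a y

/-- `{e, e'}` is a drum: an unordered pair of crossing legal edges of the form
`{u, v}` and `{u+1, v+1}`. -/
def IsDrum (n : ℕ) (e e' : Sym2 (ZMod (2 * n))) : Prop :=
  IsLegal n e ∧ IsLegal n e' ∧ Crosses n e e' ∧
  ∃ u v : ZMod (2 * n),
    (e = s(u, v) ∧ e' = s(u + 1, v + 1)) ∨ (e' = s(u, v) ∧ e = s(u + 1, v + 1))

/-- Condition (*): `n ≥ 3`, `G` (on vertex set `ZMod (2n)`) contains every C-edge,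
`G` is matching covered, `c` is a PMValid 2-edge-colouring of `G` with colours
red (= 1) and blue (= 2), and the C-edges are coloured alternately:
the edge `{i, i+1}` is red when `i` is odd and blue when `i` is even. -/
def CondStar (n : ℕ) (G : SimpleGraph (ZMod (2 * n))) (c : Sym2 (ZMod (2 * n)) → ℕ) : Prop :=
  3 ≤ n ∧ (∀ i : ZMod (2 * n), G.Adj i (i + 1)) ∧ MatchingCovered G ∧ PMValid G c 2 ∧
  ∀ i : ZMod (2 * n), c (s(i, i + 1)) = if i.val % 2 = 1 then 1 else 2


namespace PM7

/-- clockwise distance from `a` to `b` -/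
def dd {N : ℕ} (a b : ZMod N) : ℕ := (b - a).val

section Base
variable {n : ℕ} (hn : 3 ≤ n)

section TK
include hn

lemma NZ : NeZero (2*n) := ⟨by omega⟩

lemma dd_lt (a b : ZMod (2*n)) : dd a b < 2*n := by
  haveI := NZ hn; exact ZMod.val_lt _

lemma dd_self (a : ZMod (2*n)) : dd a a = 0 := by
  simp [dd, ZMod.val_zero]

lemma dd_eq_zero (a b : ZMod (2*n)) (h : dd a b = 0) : b = a := by
  haveI := NZ hn
  have := (ZMod.val_eq_zero (b - a)).1 h
  linear_combination this

lemma dd_rec (a b : ZMod (2*n)) : a + ((dd a b : ℕ) : ZMod (2*n)) = b := by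
  haveI := NZ hn
  rw [dd, ZMod.natCast_val, ZMod.cast_id]; ring

lemma dd_add_cases (a b c : ZMod (2*n)) :
    dd a b + dd b c = dd a c ∨ dd a b + dd b c = dd a c + 2*n := by
  haveI := NZ hn
  have h1 : c - a = (b - a) + (c - b) := by ring
  have h2 : dd a c = (dd a b + dd b c) % (2*n) := by
    rw [dd, h1, ZMod.val_add]; rfl
  have l1 := dd_lt hn a b; have l2 := dd_lt hn b c
  rcases Nat.lt_or_ge (dd a b + dd b c) (2*n) with h | h
  · left; rw [h2, Nat.mod_eq_of_lt h]
  · right; rw [h2, Nat.mod_eq_sub_mod h, Nat.mod_eq_of_lt (by omega)]; omega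

lemma dd_one (a : ZMod (2*n)) : dd a (a+1) = 1 := by
  haveI := NZ hn
  have : (a + 1 - a) = (1 : ZMod (2*n)) := by ring
  rw [dd, this, ZMod.val_one_eq_one_mod, Nat.mod_eq_of_lt (by omega)]

lemma dd_eq_one (a b : ZMod (2*n)) (h : dd a b = 1) : b = a + 1 := by
  have := dd_rec hn a b
  rw [h] at this; simpa using this.symm

lemma dd_shift (a b : ZMod (2*n)) : dd (a+1) (b+1) = dd a b := by
  have : (b + 1 - (a+1)) = b - a := by ring
  rw [dd, this, dd]

lemma dd_succ (a w : ZMod (2*n)) (h : dd a w + 1 < 2*n) : dd a (w+1) = dd a w + 1 := by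
  have h1 := dd_add_cases hn a w (w+1)
  rw [dd_one hn] at h1
  have := dd_lt hn a (w+1)
  omega

lemma dd_succ_top (a w : ZMod (2*n)) (h : dd a w = 2*n - 1) : dd a (w+1) = 0 := by
  have h1 := dd_add_cases hn a w (w+1)
  rw [dd_one hn] at h1
  have := dd_lt hn a (w+1)
  omega

lemma dd_pred (a w : ZMod (2*n)) (h : 1 ≤ dd a w) : dd a (w-1) = dd a w - 1 := by
  have hw : (w - 1) + 1 = w := by ring
  rcases Nat.lt_or_ge (dd a (w-1) + 1) (2*n) with h' | h'
  · have := dd_succ hn a (w-1) h'; rw [hw] at this; omega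
  · have h2 : dd a (w-1) = 2*n - 1 := by have := dd_lt hn a (w-1); omega
    have := dd_succ_top hn a (w-1) h2; rw [hw] at this; omega

lemma dd_parity (a b : ZMod (2*n)) : (dd a b + a.val + b.val) % 2 = 0 := by
  haveI := NZ hn
  rcases eq_or_ne a 0 with rfl | ha
  · have : dd 0 b = b.val := by rw [dd, sub_zero]
    rw [this]; simp [ZMod.val_zero]; omega
  · haveI : NeZero a := ⟨ha⟩
    have h1 : b - a = b + (-a) := by ring
    have h2 : dd a b = (b.val + (2*n - a.val)) % (2*n) := by
      rw [dd, h1, ZMod.val_add, ZMod.val_neg_of_ne_zero]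
    have h3 : (dd a b) % 2 = (b.val + (2*n - a.val)) % 2 := by
      rw [h2, Nat.mod_mod_of_dvd _ (by omega)]
    have := a.val_lt; have := b.val_lt
    omega

lemma val_succ_parity (a : ZMod (2*n)) : (a+1).val % 2 = (a.val + 1) % 2 := by
  haveI := NZ hn
  have h2 : (a+1).val = (a.val + 1) % (2*n) := by
    rw [ZMod.val_add, ZMod.val_one_eq_one_mod, Nat.mod_eq_of_lt (show 1 < 2*n by omega)]
  rw [h2, Nat.mod_mod_of_dvd _ (by omega)]

lemma val_pred_parity (a : ZMod (2*n)) : (a-1).val % 2 ≠ a.val % 2 := by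
  have h := val_succ_parity hn (a-1)
  rw [sub_add_cancel] at h
  omega

lemma dd_parity' (a b : ZMod (2*n)) : dd a b % 2 = (a.val + b.val) % 2 := by
  have := dd_parity hn a b; omega

end TK

section Invol

lemma pm_of_involution (G : SimpleGraph (ZMod (2*n))) (φ : ZMod (2*n) → ZMod (2*n))
    (hinv : ∀ v, φ (φ v) = v) (hadj : ∀ v, G.Adj v (φ v)) :
    IsPerfectMatching G {e | ∃ v, e = s(v, φ v)} := by
  constructor
  · rintro e ⟨v, rfl⟩; exact (SimpleGraph.mem_edgeSet G).2 (hadj v)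
  · intro v
    refine ⟨s(v, φ v), ⟨⟨v, rfl⟩, Sym2.mem_mk_left _ _⟩, ?_⟩
    rintro e ⟨⟨w, rfl⟩, hv⟩
    rcases Sym2.mem_iff.1 hv with rfl | rfl
    · rfl
    · rw [hinv w]; exact Sym2.eq_swap

/-- pairing for the single-chord completion -/
def phiS (a b v : ZMod (2*n)) : ZMod (2*n) :=
  if dd a v = 0 then b
  else if dd a v = dd a b then a
  else if dd a v < dd a b then (if dd a v % 2 = 1 then v + 1 else v - 1)
  else (if dd a v % 2 = 0 then v + 1 else v - 1)


include hn

lemma dd_inj (a v w : ZMod (2*n)) (h : dd a v = dd a w) : v = w := by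
  have h1 := dd_rec hn a v
  have h2 := dd_rec hn a w
  rw [h] at h1; exact h1.symm.trans h2

lemma phiS_invol (a b : ZMod (2*n)) (hd3 : 3 ≤ dd a b) (hdle : dd a b ≤ 2*n-3)
    (hodd : dd a b % 2 = 1) (v : ZMod (2*n)) : phiS a b (phiS a b v) = v := by
  have hmlt := dd_lt hn a v
  set D := dd a b with hD
  rcases Nat.eq_zero_or_pos (dd a v) with h0 | h0
  · -- v = a
    have hva : v = a := dd_eq_zero hn a v h0
    have e1 : phiS a b v = b := by rw [phiS, if_pos h0]
    rw [e1, phiS, if_neg (by omega), if_pos rfl, hva]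
  rcases eq_or_ne (dd a v) D with hd | hd
  · have hvb : v = b := dd_inj hn a v b (by rw [hd])
    have e1 : phiS a b v = a := by rw [phiS, if_neg (by omega), if_pos hd]
    rw [e1, phiS, if_pos (dd_self hn a), hvb]
  rcases Nat.lt_or_ge (dd a v) D with hlt | hgt
  · rcases Nat.lt_or_ge (dd a v % 2) 1 with he | ho
    · -- even, 2 ≤ m < D : v - 1
      have e1 : phiS a b v = v - 1 := by
        rw [phiS, if_neg (by omega), if_neg hd, if_pos hlt, if_neg (by omega)]
      have hm' : dd a (v-1) = dd a v - 1 := dd_pred hn a v (by omega)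
      have hodd' : (dd a v - 1) % 2 = 1 := by omega
      rw [e1, phiS, hm', if_neg (by omega), if_neg (by omega), if_pos (by omega),
        if_pos hodd', sub_add_cancel]
    · -- odd, 1 ≤ m < D : v + 1
      have e1 : phiS a b v = v + 1 := by
        rw [phiS, if_neg (by omega), if_neg hd, if_pos hlt, if_pos (by omega)]
      have hm' : dd a (v+1) = dd a v + 1 := dd_succ hn a v (by omega)
      have hlt' : dd a v + 1 < D := by omega
      rw [e1, phiS, hm', if_neg (by omega), if_neg (by omega), if_pos hlt',
        if_neg (by omega), add_sub_cancel_right]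
  · -- m > D
    rcases Nat.lt_or_ge (dd a v % 2) 1 with he | ho
    · -- even : v + 1
      have hmle : dd a v ≤ 2*n - 2 := by omega
      have e1 : phiS a b v = v + 1 := by
        rw [phiS, if_neg (by omega), if_neg hd, if_neg (by omega), if_pos (by omega)]
      have hm' : dd a (v+1) = dd a v + 1 := dd_succ hn a v (by omega)
      rw [e1, phiS, hm', if_neg (by omega), if_neg (by omega), if_neg (by omega),
        if_neg (by omega), add_sub_cancel_right]
    · -- odd, m ≥ D + 2 : v - 1
      have hge : D + 2 ≤ dd a v := by omega
      have e1 : phiS a b v = v - 1 := by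
        rw [phiS, if_neg (by omega), if_neg hd, if_neg (by omega), if_neg (by omega)]
      have hm' : dd a (v-1) = dd a v - 1 := dd_pred hn a v (by omega)
      rw [e1, phiS, hm', if_neg (by omega), if_neg (by omega), if_neg (by omega),
        if_pos (by omega), sub_add_cancel]

lemma phiS_adj (G : SimpleGraph (ZMod (2*n))) (hC : ∀ i : ZMod (2*n), G.Adj i (i + 1))
    (a b : ZMod (2*n)) (hab : G.Adj a b) (hd3 : 3 ≤ dd a b) (v : ZMod (2*n)) :
    G.Adj v (phiS a b v) := by
  rw [phiS]
  split_ifs with h1 h2 h3 h4 h5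
  · rw [dd_eq_zero hn a v h1]; exact hab
  · rw [dd_inj hn a v b (by rw [h2])]; exact hab.symm
  · exact hC v
  · have := hC (v-1); rw [sub_add_cancel] at this; exact this.symm
  · exact hC v
  · have := hC (v-1); rw [sub_add_cancel] at this; exact this.symm

lemma single_completion (G : SimpleGraph (ZMod (2*n)))
    (hC : ∀ i : ZMod (2*n), G.Adj i (i + 1)) (a b : ZMod (2*n)) (hab : G.Adj a b)
    (hd3 : 3 ≤ dd a b) (hdle : dd a b ≤ 2*n-3) (hodd : dd a b % 2 = 1) :
    ∃ M : Set (Sym2 (ZMod (2*n))), IsPerfectMatching G M ∧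
      s(a,b) ∈ M ∧ s(a+1,a+2) ∈ M ∧ s(b+1,b+2) ∈ M := by
  refine ⟨_, pm_of_involution G (phiS a b)
    (phiS_invol hn a b hd3 hdle hodd) (phiS_adj hn G hC a b hab hd3), ?_, ?_, ?_⟩
  · exact ⟨a, by rw [phiS, if_pos (dd_self hn a)]⟩
  · refine ⟨a+1, ?_⟩
    have h1 : dd a (a+1) = 1 := dd_one hn a
    have : phiS a b (a+1) = a + 1 + 1 := by
      rw [phiS, h1, if_neg (by omega), if_neg (by omega), if_pos (by omega), if_pos (by omega)]
    rw [this]; congr 1; ring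
  · refine ⟨b+1, ?_⟩
    have h1 : dd a (b+1) = dd a b + 1 := dd_succ hn a b (by omega)
    have : phiS a b (b+1) = b + 1 + 1 := by
      rw [phiS, h1, if_neg (by omega), if_neg (by omega), if_neg (by omega), if_pos (by omega)]
    rw [this]; congr 1; ring


/-- pairing for the crossing-pair completion: chords {u,x}, {u+1,y} with
cyclic order u, u+1, x, y -/
def phiP (u x y v : ZMod (2*n)) : ZMod (2*n) :=
  if dd u v = 0 then x
  else if dd u v = 1 then y
  else if dd u v = dd u x then u
  else if dd u v = dd u y then u+1
  else if dd u v < dd u x then (if dd u v % 2 = 0 then v + 1 else v - 1)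
  else if dd u v < dd u y then (if dd u v % 2 = 1 then v + 1 else v - 1)
  else (if dd u v % 2 = 0 then v + 1 else v - 1)

lemma phiP_invol (u x y : ZMod (2*n)) (hp2 : 2 ≤ dd u x) (hpe : dd u x % 2 = 0)
    (hq : dd u y % 2 = 1) (hpq : dd u x < dd u y) (v : ZMod (2*n)) :
    phiP u x y (phiP u x y v) = v := by
  have hmlt := dd_lt hn u v
  have hqlt := dd_lt hn u y
  set P := dd u x with hP
  set Q := dd u y with hQ
  rcases Nat.eq_zero_or_pos (dd u v) with h0 | h0
  · have hvu : v = u := dd_eq_zero hn u v h0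
    have e1 : phiP u x y v = x := by rw [phiP, if_pos h0]
    rw [e1, phiP, if_neg (by omega), if_neg (by omega), if_pos hP.symm, hvu]
  rcases eq_or_ne (dd u v) 1 with h1 | h1
  · have hvu : v = u + 1 := dd_eq_one hn u v h1
    have e1 : phiP u x y v = y := by rw [phiP, if_neg (by omega), if_pos h1]
    rw [e1, phiP, if_neg (by omega), if_neg (by omega), if_neg (by omega),
      if_pos hQ.symm, hvu]
  rcases eq_or_ne (dd u v) P with hp | hp
  · have hvx : v = x := dd_inj hn u v x (by rw [hp])
    have e1 : phiP u x y v = u := by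
      rw [phiP, if_neg (by omega), if_neg (by omega), if_pos hp]
    rw [e1, phiP, if_pos (dd_self hn u), hvx]
  rcases eq_or_ne (dd u v) Q with hqq | hqq
  · have hvy : v = y := dd_inj hn u v y (by rw [hqq])
    have e1 : phiP u x y v = u + 1 := by
      rw [phiP, if_neg (by omega), if_neg (by omega), if_neg (by omega), if_pos hqq]
    rw [e1, phiP, dd_one hn u, if_neg (by omega), if_pos rfl, hvy]
  rcases Nat.lt_or_ge (dd u v) P with hlt | hge
  · rcases Nat.lt_or_ge (dd u v % 2) 1 with he | ho
    · -- even, 2 ≤ m < P : v + 1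
      have e1 : phiP u x y v = v + 1 := by
        rw [phiP, if_neg (by omega), if_neg (by omega), if_neg hp, if_neg hqq,
          if_pos hlt, if_pos (by omega)]
      have hm' : dd u (v+1) = dd u v + 1 := dd_succ hn u v (by omega)
      rw [e1, phiP, hm', if_neg (by omega), if_neg (by omega), if_neg (by omega),
        if_neg (by omega), if_pos (by omega), if_neg (by omega), add_sub_cancel_right]
    · -- odd, 3 ≤ m < P : v - 1
      have hm' : dd u (v-1) = dd u v - 1 := dd_pred hn u v (by omega)
      have e1 : phiP u x y v = v - 1 := by
        rw [phiP, if_neg (by omega), if_neg (by omega), if_neg hp, if_neg hqq,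
          if_pos hlt, if_neg (by omega)]
      rw [e1, phiP, hm', if_neg (by omega), if_neg (by omega), if_neg (by omega),
        if_neg (by omega), if_pos (by omega), if_pos (by omega), sub_add_cancel]
  rcases Nat.lt_or_ge (dd u v) Q with hlt2 | hge2
  · rcases Nat.lt_or_ge (dd u v % 2) 1 with he | ho
    · -- even, P < m < Q : v - 1
      have hm' : dd u (v-1) = dd u v - 1 := dd_pred hn u v (by omega)
      have e1 : phiP u x y v = v - 1 := by
        rw [phiP, if_neg (by omega), if_neg (by omega), if_neg hp, if_neg hqq,
          if_neg (by omega), if_pos hlt2, if_neg (by omega)]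
      rw [e1, phiP, hm', if_neg (by omega), if_neg (by omega), if_neg (by omega),
        if_neg (by omega), if_neg (by omega), if_pos (by omega), if_pos (by omega),
        sub_add_cancel]
    · -- odd, P < m < Q : v + 1
      have hm' : dd u (v+1) = dd u v + 1 := dd_succ hn u v (by omega)
      have e1 : phiP u x y v = v + 1 := by
        rw [phiP, if_neg (by omega), if_neg (by omega), if_neg hp, if_neg hqq,
          if_neg (by omega), if_pos hlt2, if_pos (by omega)]
      rw [e1, phiP, hm', if_neg (by omega), if_neg (by omega), if_neg (by omega),
        if_neg (by omega), if_neg (by omega), if_pos (by omega), if_neg (by omega),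
        add_sub_cancel_right]
  · rcases Nat.lt_or_ge (dd u v % 2) 1 with he | ho
    · -- even, m > Q : v + 1
      have hm' : dd u (v+1) = dd u v + 1 := dd_succ hn u v (by omega)
      have e1 : phiP u x y v = v + 1 := by
        rw [phiP, if_neg (by omega), if_neg (by omega), if_neg hp, if_neg hqq,
          if_neg (by omega), if_neg (by omega), if_pos (by omega)]
      rw [e1, phiP, hm', if_neg (by omega), if_neg (by omega), if_neg (by omega),
        if_neg (by omega), if_neg (by omega), if_neg (by omega), if_neg (by omega),
        add_sub_cancel_right]
    · -- odd, m > Q : v - 1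
      have hm' : dd u (v-1) = dd u v - 1 := dd_pred hn u v (by omega)
      have e1 : phiP u x y v = v - 1 := by
        rw [phiP, if_neg (by omega), if_neg (by omega), if_neg hp, if_neg hqq,
          if_neg (by omega), if_neg (by omega), if_neg (by omega)]
      rw [e1, phiP, hm', if_neg (by omega), if_neg (by omega), if_neg (by omega),
        if_neg (by omega), if_neg (by omega), if_neg (by omega), if_pos (by omega),
        sub_add_cancel]

lemma phiP_adj (G : SimpleGraph (ZMod (2*n))) (hC : ∀ i : ZMod (2*n), G.Adj i (i + 1))
    (u x y : ZMod (2*n)) (hux : G.Adj u x) (huy : G.Adj (u+1) y) (v : ZMod (2*n)) :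
    G.Adj v (phiP u x y v) := by
  rw [phiP]
  split_ifs with h1 h2 h3 h4 h5 h6 h7 h8 h9
  · rw [dd_eq_zero hn u v h1]; exact hux
  · rw [dd_eq_one hn u v h2]; exact huy
  · rw [dd_inj hn u v x (by rw [h3])]; exact hux.symm
  · rw [dd_inj hn u v y (by rw [h4])]; exact huy.symm
  · exact hC v
  · have := hC (v-1); rw [sub_add_cancel] at this; exact this.symm
  · exact hC v
  · have := hC (v-1); rw [sub_add_cancel] at this; exact this.symm
  · exact hC v
  · have := hC (v-1); rw [sub_add_cancel] at this; exact this.symm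

lemma pair_completion (G : SimpleGraph (ZMod (2*n)))
    (hC : ∀ i : ZMod (2*n), G.Adj i (i + 1)) (u x y : ZMod (2*n))
    (hux : G.Adj u x) (huy : G.Adj (u+1) y)
    (hp2 : 2 ≤ dd u x) (hpe : dd u x % 2 = 0) (hq : dd u y % 2 = 1)
    (hpq : dd u x < dd u y) :
    ∃ M : Set (Sym2 (ZMod (2*n))), IsPerfectMatching G M ∧
      s(u,x) ∈ M ∧ s(u+1,y) ∈ M ∧ (dd u x + 3 ≤ dd u y → s(x+1,x+2) ∈ M) := by
  refine ⟨_, pm_of_involution G (phiP u x y)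
    (phiP_invol hn u x y hp2 hpe hq hpq) (phiP_adj hn G hC u x y hux huy), ?_, ?_, ?_⟩
  · exact ⟨u, by rw [phiP, if_pos (dd_self hn u)]⟩
  · refine ⟨u+1, ?_⟩
    have h1 : dd u (u+1) = 1 := dd_one hn u
    rw [phiP, h1, if_neg (by omega), if_pos rfl]
  · intro h3
    refine ⟨x+1, ?_⟩
    have hqlt := dd_lt hn u y
    have h1 : dd u (x+1) = dd u x + 1 := dd_succ hn u x (by omega)
    have : phiP u x y (x+1) = x + 1 + 1 := by
      rw [phiP, h1, if_neg (by omega), if_neg (by omega), if_neg (by omega),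
        if_neg (by omega), if_neg (by omega), if_pos (by omega), if_pos (by omega)]
    rw [this]; congr 1; ring


lemma succ_ne (a : ZMod (2*n)) : a + 1 ≠ a := by
  intro h
  have h1 := dd_one hn a
  rw [h, dd_self hn a] at h1
  omega

lemma pm_unique {G : SimpleGraph (ZMod (2*n))} {M : Set (Sym2 (ZMod (2*n)))}
    (hM : IsPerfectMatching G M) {e e' : Sym2 (ZMod (2*n))}
    (he : e ∈ M) (he' : e' ∈ M) {v : ZMod (2*n)} (hv : v ∈ e) (hv' : v ∈ e') : e = e' := by
  obtain ⟨w, _, hu⟩ := hM.2 v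
  rw [hu e ⟨he, hv⟩, hu e' ⟨he', hv'⟩]

end Invol

/-- the C-edge of colour-class `r` at `v` -/
def cce (r : ℕ) (v : ZMod (2*n)) : Sym2 (ZMod (2*n)) :=
  if v.val % 2 = r then s(v, v+1) else s(v-1, v)

lemma inArc_iff (i j k : ZMod (2*n)) : InArc n i j k ↔ (0 < dd i k ∧ dd i k < dd i j) :=
  Iff.rfl

lemma inc_rep {G : SimpleGraph (ZMod (2*n))} {v : ZMod (2*n)} {e : Sym2 (ZMod (2*n))}
    (he : e ∈ G.incidenceSet v) : ∃ w, e = s(v,w) ∧ G.Adj v w := by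
  refine ⟨Sym2.Mem.other he.2, (Sym2.other_spec he.2).symm, ?_⟩
  have h1 : s(v, Sym2.Mem.other he.2) ∈ G.edgeSet := by
    rw [Sym2.other_spec he.2]; exact he.1
  exact (G.mem_edgeSet).1 h1

end Base

section Colour
variable {n : ℕ} {G : SimpleGraph (ZMod (2*n))} {c : Sym2 (ZMod (2*n)) → ℕ}
  {r col col' : ℕ}
variable (hn : 3 ≤ n)
  (hC : ∀ i : ZMod (2*n), G.Adj i (i + 1))
  (hmono : ∀ M, IsPerfectMatching G M → ∀ e ∈ M, ∀ e' ∈ M, c e = c e')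
  (hr : r ≤ 1) (hne : col ≠ col')
  (hrc : ∀ i : ZMod (2*n), c s(i, i+1) = if i.val % 2 = r then col else col')

include hn hC hmono hr hne hrc

lemma legal_of_chord (a b : ZMod (2*n)) (hab : G.Adj a b) (hnc : ¬IsCEdge n s(a,b)) :
    a.val % 2 = b.val % 2 := by
  by_contra hpar
  have hdd : dd a b % 2 = 1 := by
    have := dd_parity' hn a b
    have h2 := Nat.mod_lt a.val (show 0 < 2 by omega)
    have h3 := Nat.mod_lt b.val (show 0 < 2 by omega)
    omega
  have hne0 : dd a b ≠ 0 := by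
    intro h; exact hab.ne' (dd_eq_zero hn a b h)
  have hne1 : dd a b ≠ 1 := by
    intro h; exact hnc ⟨a, by rw [dd_eq_one hn a b h]⟩
  have hnetop : dd a b ≠ 2*n - 1 := by
    intro h
    have h1 := dd_add_cases hn a b a
    rw [dd_self hn a] at h1
    have h2 : dd b a = 1 := by have := dd_lt hn b a; omega
    exact hnc ⟨b, by rw [dd_eq_one hn b a h2, Sym2.eq_swap]⟩
  have hlt := dd_lt hn a b
  obtain ⟨M, hM, _, h2, h3⟩ := single_completion hn G hC a b hab (by omega) (by omega) hdd
  have hcc := hmono M hM _ h2 _ h3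
  rw [show (a:ZMod (2*n)) + 2 = a + 1 + 1 from by ring,
    show (b:ZMod (2*n)) + 2 = b + 1 + 1 from by ring, hrc (a+1), hrc (b+1)] at hcc
  have hpa := val_succ_parity hn a
  have hpb := val_succ_parity hn b
  have h2a := Nat.mod_lt a.val (show 0 < 2 by omega)
  have h2b := Nat.mod_lt b.val (show 0 < 2 by omega)
  by_cases ha : (a+1).val % 2 = r
  · rw [if_pos ha, if_neg (by omega)] at hcc; exact hne hcc
  · rw [if_neg ha, if_pos (by omega)] at hcc; exact hne hcc.symm


lemma partner_main : ∀ k : ℕ,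
    (∀ M : Set (Sym2 (ZMod (2*n))), IsPerfectMatching G M → (∀ e ∈ M, c e = col) →
      ∀ a b : ZMod (2*n), s(a,b) ∈ M → ¬IsCEdge n s(a,b) → a.val % 2 = r →
        dd a b = k → s(a+1,b+1) ∈ M) ∧
    (∀ M : Set (Sym2 (ZMod (2*n))), IsPerfectMatching G M → (∀ e ∈ M, c e = col) →
      ∀ p q : ZMod (2*n), s(p,q) ∈ M → ¬IsCEdge n s(p,q) → p.val % 2 ≠ r →
        dd q p = k → s(p-1,q-1) ∈ M) := by
  intro k
  induction k using Nat.strong_induction_on with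
  | _ k IH =>
  constructor
  · -- O part
    intro M hM hMc a b hab hnc har hk
    have hadj : G.Adj a b := (G.mem_edgeSet).1 (hM.1 hab)
    have hbr : b.val % 2 = r := by
      have := legal_of_chord hn hC hmono hr hne hrc a b hadj hnc; omega
    have hk0 : dd a b ≠ 0 := fun h => hadj.ne' (dd_eq_zero hn a b h)
    have hkpar : dd a b % 2 = 0 := by
      have := dd_parity' hn a b; omega
    have hklt := dd_lt hn a b
    have hk2 : 2 ≤ dd a b := by omega
    have hktop : dd a b ≤ 2*n - 2 := by omega
    obtain ⟨ef, ⟨hefM, hefv⟩, _⟩ := hM.2 (a+1)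
    set x := Sym2.Mem.other hefv with hxdef
    have hef : s(a+1, x) = ef := Sym2.other_spec hefv
    have hfM : s(a+1, x) ∈ M := by rw [hef]; exact hefM
    have hfadj : G.Adj (a+1) x := (G.mem_edgeSet).1 (hM.1 hfM)
    have hxne : x ≠ a+1 := hfadj.ne'
    have hfnc : ¬IsCEdge n s(a+1, x) := by
      rintro ⟨i, hi⟩
      rcases Sym2.eq_iff.1 hi with ⟨h1, h2⟩ | ⟨h1, h2⟩
      · have hcf := hMc _ hfM
        rw [hi, hrc i] at hcf
        have hir : i.val % 2 ≠ r := by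
          have := val_succ_parity hn a; rw [h1] at this; omega
        rw [if_neg hir] at hcf
        exact hne hcf.symm
      · have hia : i = a := by
          have h5 : i + 1 = a + 1 := h1.symm
          exact add_right_cancel h5
        have hxa : x = a := by rw [h2, hia]
        have heq2 : s(a+1, x) = s(a, b) :=
          pm_unique hn hM hfM hab (by rw [hxa]; exact Sym2.mem_mk_right _ _)
            (Sym2.mem_mk_left _ _)
        rcases Sym2.eq_iff.1 heq2 with ⟨h3, h4⟩ | ⟨h3, h4⟩
        · exact succ_ne hn a h3
        · exact hnc ⟨a, by rw [← h3]⟩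
    have hxr : x.val % 2 ≠ r := by
      have hl := legal_of_chord hn hC hmono hr hne hrc (a+1) x hfadj hfnc
      have := val_succ_parity hn a
      omega
    have hmlt := dd_lt hn a x
    have hm0 : dd a x ≠ 0 := by
      intro h; have h2 := dd_eq_zero hn a x h; rw [h2] at hxr; exact hxr har
    have hmpar : dd a x % 2 = 1 := by
      have := dd_parity' hn a x; omega
    rcases lt_trichotomy (dd a x) (dd a b + 1) with hlt | heq | hgt
    · -- bad case
      exfalso
      have hmk : dd a x < dd a b := by omega
      have hm1 : dd a x ≠ 1 := by
        intro h; exact hxne (dd_eq_one hn a x h)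
      have hd1 : dd (a+1) x = dd a x - 1 := by
        have h1 := dd_add_cases hn a (a+1) x
        rw [dd_one hn a] at h1
        have := dd_lt hn (a+1) x
        omega
      have hfM' : s(x, a+1) ∈ M := by rw [Sym2.eq_swap]; exact hfM
      have hfnc' : ¬IsCEdge n s(x, a+1) := by rw [Sym2.eq_swap]; exact hfnc
      have hE := (IH (dd a x - 1) (by omega)).2 M hM hMc x (a+1) hfM' hfnc' hxr hd1
      rw [add_sub_cancel_right] at hE
      have heq2 : s(x-1, a) = s(a, b) :=
        pm_unique hn hM hE hab (Sym2.mem_mk_right _ _) (Sym2.mem_mk_left _ _)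
      rcases Sym2.eq_iff.1 heq2 with ⟨h3, h4⟩ | ⟨h3, h4⟩
      · exact hadj.ne h4
      · have hxb : x = b + 1 := by rw [← h3]; ring
        have h5 : dd a (b+1) = dd a b + 1 := dd_succ hn a b (by omega)
        rw [← hxb] at h5
        omega
    · -- done: x = b+1
      have h5 : dd a (b+1) = dd a b + 1 := dd_succ hn a b (by omega)
      have hxb : x = b + 1 := dd_inj hn a x (b+1) (by omega)
      rw [← hxb]; exact hfM
    · -- good case
      exfalso
      have hm3 : dd a b + 3 ≤ dd a x := by omega
      obtain ⟨N, hN, hN1, _, hN3⟩ :=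
        pair_completion hn G hC a b x hadj hfadj hk2 hkpar hmpar (by omega)
      have hcc := hmono N hN _ hN1 _ (hN3 (by omega))
      rw [show (b:ZMod (2*n)) + 2 = b + 1 + 1 from by ring, hrc (b+1)] at hcc
      have hbpar : (b+1).val % 2 ≠ r := by have := val_succ_parity hn b; omega
      rw [if_neg hbpar] at hcc
      have hcol : c s(a,b) = col := hMc _ hab
      exact hne (hcol.symm.trans hcc)
  · -- E part
    intro M hM hMc p q hpq hnc hpr hk
    have hadj : G.Adj p q := (G.mem_edgeSet).1 (hM.1 hpq)
    have h2p := Nat.mod_lt p.val (show 0 < 2 by omega)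
    have h2q := Nat.mod_lt q.val (show 0 < 2 by omega)
    have hqr : q.val % 2 ≠ r := by
      have := legal_of_chord hn hC hmono hr hne hrc p q hadj hnc; omega
    have hk0 : dd q p ≠ 0 := fun h => hadj.ne (dd_eq_zero hn q p h)
    have hkpar : dd q p % 2 = 0 := by
      have := dd_parity' hn q p; omega
    have hklt := dd_lt hn q p
    have hk2 : 2 ≤ dd q p := by omega
    have hktop : dd q p ≤ 2*n-2 := by omega
    have hpqd : dd p q = 2*n - dd q p := by
      have h1 := dd_add_cases hn q p q
      rw [dd_self hn q] at h1
      have := dd_lt hn p q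
      omega
    have hp1 : (p-1) + 1 = p := sub_add_cancel p 1
    obtain ⟨ef, ⟨hefM, hefv⟩, _⟩ := hM.2 (p-1)
    set z := Sym2.Mem.other hefv with hzdef
    have hef : s(p-1, z) = ef := Sym2.other_spec hefv
    have hfM : s(p-1, z) ∈ M := by rw [hef]; exact hefM
    have hfadj : G.Adj (p-1) z := (G.mem_edgeSet).1 (hM.1 hfM)
    have hzne : z ≠ p-1 := hfadj.ne'
    have hp1r : (p-1).val % 2 = r := by
      have := val_pred_parity hn p
      have := Nat.mod_lt (p-1).val (show 0 < 2 by omega)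
      omega
    have hfnc : ¬IsCEdge n s(p-1, z) := by
      rintro ⟨i, hi⟩
      rcases Sym2.eq_iff.1 hi with ⟨h1, h2⟩ | ⟨h1, h2⟩
      · have hzp : z = p := by rw [h2, ← h1, sub_add_cancel]
        have heq2 : s(p-1, z) = s(p, q) :=
          pm_unique hn hM hfM hpq (by rw [hzp]; exact Sym2.mem_mk_right _ _)
            (Sym2.mem_mk_left _ _)
        rcases Sym2.eq_iff.1 heq2 with ⟨h3, h4⟩ | ⟨h3, h4⟩
        · have hc := succ_ne hn (p-1)
          rw [hp1] at hc
          exact hc h3.symm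
        · rw [h3] at hp1r; exact hqr hp1r
      · have hcf := hMc _ hfM
        rw [hi, hrc i] at hcf
        have hir : i.val % 2 ≠ r := by
          have h4 := val_succ_parity hn i
          rw [← h1] at h4
          have := Nat.mod_lt i.val (show 0 < 2 by omega)
          omega
        rw [if_neg hir] at hcf
        exact hne hcf.symm
    have hzr : z.val % 2 = r := by
      have := legal_of_chord hn hC hmono hr hne hrc (p-1) z hfadj hfnc
      omega
    rcases eq_or_ne z (q-1) with hzq | hzq
    · rw [← hzq]; exact hfM
    exfalso
    have hmlt := dd_lt hn p z
    have hm0 : dd p z ≠ 0 := by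
      intro h; have h2 := dd_eq_zero hn p z h; rw [h2] at hzr; exact hpr hzr
    have hmpar : dd p z % 2 = 1 := by
      have := dd_parity' hn p z; omega
    have hmq : dd p z ≠ dd p q := by
      intro h
      have h2 : z = q := dd_inj hn p z q h
      rw [h2] at hzr; exact hqr hzr
    have hmtop : dd p z ≠ 2*n - 1 := by
      intro h
      have h1 := dd_add_cases hn p z p
      rw [dd_self hn p] at h1
      have h2 : dd z p = 1 := by have := dd_lt hn z p; omega
      have h3 := dd_eq_one hn z p h2
      exact hzne (by rw [h3]; ring)
    have hdd1 : dd (p-1) p = 1 := by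
      have := dd_one hn (p-1); rw [hp1] at this; exact this
    rcases Nat.lt_or_ge (dd p z) (dd p q) with hgood | hbad
    · -- good: pair completion
      have hdz : dd (p-1) z = dd p z + 1 := by
        have h1 := dd_add_cases hn (p-1) p z
        have := dd_lt hn (p-1) z
        omega
      have hdq : dd (p-1) q = dd p q + 1 := by
        have h1 := dd_add_cases hn (p-1) p q
        have := dd_lt hn (p-1) q
        have := dd_lt hn p q
        omega
      have hmq3 : dd p z + 3 ≤ dd p q := by
        have hne1 : dd p z + 1 ≠ dd p q := by
          intro h
          have h5 : dd p (z+1) = dd p z + 1 := dd_succ hn p z (by omega)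
          have h6 : z + 1 = q := dd_inj hn p (z+1) q (by omega)
          exact hzq (by rw [← h6]; ring)
        omega
      obtain ⟨N, hN, hN1, hN2, hN3⟩ :=
        pair_completion hn G hC (p-1) z q hfadj (by rw [hp1]; exact hadj)
          (by omega) (by omega) (by omega) (by omega)
      have hcc := hmono N hN _ hN2 _ (hN3 (by omega))
      rw [show (z:ZMod (2*n)) + 2 = z + 1 + 1 from by ring, hrc (z+1)] at hcc
      have hz1r : (z+1).val % 2 ≠ r := by have := val_succ_parity hn z; omega
      rw [if_neg hz1r] at hcc
      have hcol : c s((p-1)+1, q) = col := by rw [hp1]; exact hMc _ hpq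
      exact hne (hcol.symm.trans hcc)
    · -- bad: z strictly beyond q
      have hgt : dd p q < dd p z := by omega
      have hdqz : dd q z = dd p z - dd p q := by
        have h1 := dd_add_cases hn p q z
        have := dd_lt hn q z
        omega
      have hdqz0 : dd q z ≠ 0 := by
        intro h
        have h2 : z = q := dd_eq_zero hn q z h
        rw [h2] at hzr; exact hqr hzr
      have hqp1 : dd q (p-1) = dd q p - 1 := by
        have h1 := dd_add_cases hn q (p-1) p
        have := dd_lt hn q (p-1)
        omega
      have hdzp : dd z (p-1) = dd q (p-1) - dd q z := by
        have h1 := dd_add_cases hn q z (p-1)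
        have := dd_lt hn z (p-1)
        omega
      have hzqlt : dd q z < dd q (p-1) := by omega
      have hOnc : ¬IsCEdge n s(z, p-1) := by
        rintro ⟨i, hi⟩
        rcases Sym2.eq_iff.1 hi with ⟨h1, h2⟩ | ⟨h1, h2⟩
        · have h3 : p - 1 = z + 1 := by rw [h2, h1]
          have h4 := val_succ_parity hn z
          rw [← h3] at h4
          omega
        · have h3 : z = p := by rw [h1, ← h2, hp1]
          rw [h3] at hzr; exact hpr hzr
      have hO := (IH (dd z (p-1)) (by omega)).1 M hM hMc z (p-1)
        (by rw [Sym2.eq_swap]; exact hfM) hOnc hzr rfl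
      rw [hp1] at hO
      have heq2 : s(z+1, p) = s(p, q) :=
        pm_unique hn hM hO hpq (Sym2.mem_mk_right _ _) (Sym2.mem_mk_left _ _)
      rcases Sym2.eq_iff.1 heq2 with ⟨h3, h4⟩ | ⟨h3, h4⟩
      · exact hadj.ne h4
      · exact hzq (by rw [← h3]; ring)


lemma chord_basic (v w : ZMod (2*n)) (hadj : G.Adj v w) (hnc : ¬IsCEdge n s(v,w)) :
    2 ≤ dd v w ∧ dd v w ≤ 2*n - 2 := by
  have hlt := dd_lt hn v w
  have h0 : dd v w ≠ 0 := fun h => hadj.ne' (dd_eq_zero hn v w h)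
  have h1 : dd v w ≠ 1 := fun h => hnc ⟨v, by rw [dd_eq_one hn v w h]⟩
  have h2 : dd v w ≠ 2*n - 1 := by
    intro h
    have h3 := dd_add_cases hn v w v
    rw [dd_self hn v] at h3
    have h4 : dd w v = 1 := by have := dd_lt hn w v; omega
    exact hnc ⟨w, by rw [dd_eq_one hn w v h4, Sym2.eq_swap]⟩
  exact ⟨by omega, by omega⟩

lemma chord_unique (hcov : MatchingCovered G) (v w w' : ZMod (2*n))
    (h1 : G.Adj v w) (h2 : G.Adj v w')
    (hnc1 : ¬IsCEdge n s(v,w)) (hnc2 : ¬IsCEdge n s(v,w'))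
    (hc1 : c s(v,w) = col) (hc2 : c s(v,w') = col) : w = w' := by
  -- the asymmetric core
  have aux : ∀ w w' : ZMod (2*n), G.Adj v w → G.Adj v w' →
      ¬IsCEdge n s(v,w) → ¬IsCEdge n s(v,w') →
      c s(v,w) = col → c s(v,w') = col → dd v w < dd v w' → False := by
    intro w w' h1 h2 hnc1 hnc2 hc1 hc2 hlt
    obtain ⟨hb1, hb1'⟩ := chord_basic hn hC hmono hr hne hrc v w h1 hnc1
    obtain ⟨hb2, hb2'⟩ := chord_basic hn hC hmono hr hne hrc v w' h2 hnc2
    have hleg1 := legal_of_chord hn hC hmono hr hne hrc v w h1 hnc1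
    have hleg2 := legal_of_chord hn hC hmono hr hne hrc v w' h2 hnc2
    have hpar1 := dd_parity' hn v w
    have hpar2 := dd_parity' hn v w'
    have h2v := Nat.mod_lt v.val (show 0 < 2 by omega)
    -- dd v w and dd v w' are both even
    have hd1e : dd v w % 2 = 0 := by omega
    have hd2e : dd v w' % 2 = 0 := by omega
    -- a perfect matching through s(v,w')
    obtain ⟨M, hM, hmem⟩ := hcov s(v,w') ((G.mem_edgeSet).2 h2)
    have hMc : ∀ e ∈ M, c e = col := by
      intro e he
      rw [hmono M hM e he _ hmem, hc2]
    by_cases hvr : v.val % 2 = r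
    · -- partner of w' is s(v+1, w'+1)
      have hP := (partner_main hn hC hmono hr hne hrc (dd v w')).1 M hM hMc
        v w' hmem hnc2 hvr rfl
      have hPadj : G.Adj (v+1) (w'+1) := (G.mem_edgeSet).1 (hM.1 hP)
      have hq1 : dd v (w'+1) = dd v w' + 1 := dd_succ hn v w' (by omega)
      obtain ⟨N, hN, hN1, _, hN3⟩ :=
        pair_completion hn G hC v w (w'+1) h1 hPadj hb1 hd1e (by omega) (by omega)
      have hcc := hmono N hN _ hN1 _ (hN3 (by omega))
      rw [show (w:ZMod (2*n)) + 2 = w + 1 + 1 from by ring, hrc (w+1)] at hcc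
      have hw1r : (w+1).val % 2 ≠ r := by
        have := val_succ_parity hn w; omega
      rw [if_neg hw1r] at hcc
      exact hne (hc1.symm.trans hcc)
    · -- partner of w is s(v-1, w-1); chords s(v-1,w-1) and s(v,w')
      obtain ⟨M2, hM2, hmem2⟩ := hcov s(v,w) ((G.mem_edgeSet).2 h1)
      have hM2c : ∀ e ∈ M2, c e = col := by
        intro e he
        rw [hmono M2 hM2 e he _ hmem2, hc1]
      have hP := (partner_main hn hC hmono hr hne hrc (dd w v)).2 M2 hM2 hM2c
        v w hmem2 hnc1 hvr rfl
      have hPadj : G.Adj (v-1) (w-1) := (G.mem_edgeSet).1 (hM2.1 hP)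
      have hp1v : (v-1) + 1 = v := sub_add_cancel v 1
      have hp1w : (w-1) + 1 = w := sub_add_cancel w 1
      -- distances from v-1
      have hdx : dd (v-1) (w-1) = dd v w := by
        have := dd_shift hn (v-1) (w-1)
        rw [hp1v, hp1w] at this
        omega
      have hdy : dd (v-1) w' = dd v w' + 1 := by
        have h3 := dd_add_cases hn (v-1) v w'
        have hdd1 : dd (v-1) v = 1 := by
          have := dd_one hn (v-1); rw [hp1v] at this; exact this
        have := dd_lt hn (v-1) w'
        omega
      obtain ⟨N, hN, hN1, hN2, hN3⟩ :=
        pair_completion hn G hC (v-1) (w-1) w' hPadj (by rw [hp1v]; exact h2)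
          (by omega) (by omega) (by omega) (by omega)
      have hcc := hmono N hN _ hN2 _ (hN3 (by omega))
      rw [show (w:ZMod (2*n)) - 1 + 2 = w + 1 from by ring,
        show (w:ZMod (2*n)) - 1 + 1 = w from by ring] at hcc
      rw [hrc w] at hcc
      have hwr : w.val % 2 ≠ r := by omega
      rw [if_neg hwr] at hcc
      have hcol : c s((v-1)+1, w') = col := by rw [hp1v]; exact hc2
      exact hne (hcol.symm.trans hcc)
  rcases lt_trichotomy (dd v w) (dd v w') with hlt | heq | hgt
  · exact absurd (aux w w' h1 h2 hnc1 hnc2 hc1 hc2 hlt) (by simp)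
  · exact dd_inj hn v w w' heq
  · exact absurd (aux w' w h2 h1 hnc2 hnc1 hc2 hc1 hgt) (by simp)


lemma classify_cedge (v : ZMod (2*n)) (e : Sym2 (ZMod (2*n))) (he2 : v ∈ e)
    (hcol : c e = col) (hce : IsCEdge n e) : e = cce r v := by
  obtain ⟨i, rfl⟩ := hce
  have hic := hcol
  rw [hrc i] at hic
  have hir : i.val % 2 = r := by
    by_contra hh; rw [if_neg hh] at hic; exact hne hic.symm
  rcases Sym2.mem_iff.1 he2 with hv | hv
  · subst hv; simp [cce, hir]
  · subst hv
    have hip : (i+1).val % 2 ≠ r := by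
      have := val_succ_parity hn i
      have := Nat.mod_lt i.val (show 0 < 2 by omega)
      omega
    simp only [cce, if_neg hip]
    rw [add_sub_cancel_right]

lemma drum_core (hcov : MatchingCovered G) (v w : ZMod (2*n))
    (hadj : G.Adj v w) (hnc : ¬IsCEdge n s(v,w)) (hc : c s(v,w) = col) :
    ∃ u u' : ZMod (2*n), s(u,u') ∈ G.edgeSet ∧ s(u+1,u'+1) ∈ G.edgeSet ∧
      IsDrum n (s(u,u')) (s(u+1,u'+1)) ∧
      s(v,w) ∈ ({s(u, u'), s(u + 1, u' + 1), s(u, u + 1), s(u', u' + 1)} :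
        Set (Sym2 (ZMod (2 * n)))) ∧
      cce r v ∈ ({s(u, u'), s(u + 1, u' + 1), s(u, u + 1), s(u', u' + 1)} :
        Set (Sym2 (ZMod (2 * n)))) ∧
      ∀ f ∈ ({s(u, u'), s(u + 1, u' + 1), s(u, u + 1), s(u', u' + 1)} :
        Set (Sym2 (ZMod (2 * n)))), c f = col := by
  obtain ⟨hb1, hb2⟩ := chord_basic hn hC hmono hr hne hrc v w hadj hnc
  have hleg := legal_of_chord hn hC hmono hr hne hrc v w hadj hnc
  have hsum : dd v w + dd w v = 2*n := by
    have h1 := dd_add_cases hn v w v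
    rw [dd_self hn v] at h1
    omega
  have h2v := Nat.mod_lt v.val (show 0 < 2 by omega)
  have h2w := Nat.mod_lt w.val (show 0 < 2 by omega)
  obtain ⟨M, hM, hmem⟩ := hcov s(v,w) ((G.mem_edgeSet).2 hadj)
  have hMc : ∀ e ∈ M, c e = col := by
    intro e he
    rw [hmono M hM e he _ hmem, hc]
  by_cases hvr : v.val % 2 = r
  · have hwr : w.val % 2 = r := by omega
    have hP := (partner_main hn hC hmono hr hne hrc (dd v w)).1 M hM hMc
      v w hmem hnc hvr rfl
    have hPG : s(v+1,w+1) ∈ G.edgeSet := hM.1 hP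
    have hd1 := dd_one hn v
    have hd1w := dd_one hn w
    refine ⟨v, w, (G.mem_edgeSet).2 hadj, hPG, ?_, ?_, ?_, ?_⟩
    · refine ⟨⟨v, w, rfl, hleg⟩, ⟨v+1, w+1, rfl, ?_⟩, ?_, ⟨v, w, Or.inl ⟨rfl, rfl⟩⟩⟩
      · have := val_succ_parity hn v
        have := val_succ_parity hn w
        omega
      · exact ⟨v, w, v+1, w+1, rfl, rfl,
          (inArc_iff v w (v+1)).2 ⟨by omega, by omega⟩,
          (inArc_iff w v (w+1)).2 ⟨by omega, by omega⟩⟩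
    · exact Set.mem_insert _ _
    · have : cce r v = s(v, v+1) := by simp [cce, hvr]
      rw [this]
      simp only [Set.mem_insert_iff, Set.mem_singleton_iff]; tauto
    · intro f hf
      simp only [Set.mem_insert_iff, Set.mem_singleton_iff] at hf
      rcases hf with rfl | rfl | rfl | rfl
      · exact hc
      · exact hMc _ hP
      · rw [hrc v, if_pos hvr]
      · rw [hrc w, if_pos hwr]
  · have hwr : w.val % 2 ≠ r := by omega
    have hP := (partner_main hn hC hmono hr hne hrc (dd w v)).2 M hM hMc
      v w hmem hnc hvr rfl
    have hPG : s(v-1,w-1) ∈ G.edgeSet := hM.1 hP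
    have hp1v : (v-1) + 1 = v := sub_add_cancel v 1
    have hp1w : (w-1) + 1 = w := sub_add_cancel w 1
    have hdvw : dd (v-1) (w-1) = dd v w := by
      have := dd_shift hn (v-1) (w-1)
      rw [hp1v, hp1w] at this
      omega
    have hdwv : dd (w-1) (v-1) = dd w v := by
      have := dd_shift hn (w-1) (v-1)
      rw [hp1v, hp1w] at this
      omega
    have hd1 := dd_one hn (v-1)
    rw [hp1v] at hd1
    have hd1w := dd_one hn (w-1)
    rw [hp1w] at hd1w
    have hv1r : (v-1).val % 2 = r := by
      have := val_pred_parity hn v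
      have := Nat.mod_lt (v-1).val (show 0 < 2 by omega)
      omega
    have hw1r : (w-1).val % 2 = r := by
      have := val_pred_parity hn w
      have := Nat.mod_lt (w-1).val (show 0 < 2 by omega)
      omega
    refine ⟨v-1, w-1, hPG, ?_, ?_, ?_, ?_, ?_⟩
    · rw [hp1v, hp1w]; exact (G.mem_edgeSet).2 hadj
    · refine ⟨⟨v-1, w-1, rfl, by omega⟩, ?_, ?_, ⟨v-1, w-1, Or.inl ⟨rfl, rfl⟩⟩⟩
      · rw [hp1v, hp1w]; exact ⟨v, w, rfl, hleg⟩
      · refine ⟨v-1, w-1, (v-1)+1, (w-1)+1, rfl, rfl, ?_, ?_⟩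
        · rw [hp1v]
          exact (inArc_iff (v-1) (w-1) v).2 ⟨by omega, by omega⟩
        · rw [hp1w]
          exact (inArc_iff (w-1) (v-1) w).2 ⟨by omega, by omega⟩
    · have : s(v, w) = s((v-1)+1, (w-1)+1) := by rw [hp1v, hp1w]
      rw [this]
      simp only [Set.mem_insert_iff, Set.mem_singleton_iff]; tauto
    · have : cce r v = s(v-1, (v-1)+1) := by rw [hp1v]; simp [cce, hvr]
      rw [this]
      simp only [Set.mem_insert_iff, Set.mem_singleton_iff]; tauto
    · intro f hf
      simp only [Set.mem_insert_iff, Set.mem_singleton_iff] at hf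
      rcases hf with rfl | rfl | rfl | rfl
      · exact hMc _ hP
      · rw [hp1v, hp1w]; exact hc
      · rw [hrc (v-1), if_pos hv1r]
      · rw [hrc (w-1), if_pos hw1r]

lemma ncard_le_two (hcov : MatchingCovered G) (v : ZMod (2*n)) :
    {e ∈ G.incidenceSet v | c e = col}.ncard ≤ 2 := by
  have hsub : ∃ E1 E2 : Sym2 (ZMod (2*n)),
      {e ∈ G.incidenceSet v | c e = col} ⊆ {E1, E2} := by
    by_cases hch : ∃ x, G.Adj v x ∧ ¬IsCEdge n s(v,x) ∧ c s(v,x) = col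
    · obtain ⟨x0, hx0, hx0n, hx0c⟩ := hch
      refine ⟨cce r v, s(v,x0), ?_⟩
      rintro e ⟨heI, heC⟩
      obtain ⟨x, rfl, hAdj⟩ := inc_rep heI
      by_cases hic : IsCEdge n s(v,x)
      · exact Or.inl (classify_cedge hn hC hmono hr hne hrc v _ heI.2 heC hic)
      · have := chord_unique hn hC hmono hr hne hrc hcov v x x0 hAdj hx0 hic hx0n heC hx0c
        exact Or.inr (by rw [this]; rfl)
    · refine ⟨cce r v, cce r v, ?_⟩
      rintro e ⟨heI, heC⟩
      obtain ⟨x, rfl, hAdj⟩ := inc_rep heI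
      by_cases hic : IsCEdge n s(v,x)
      · exact Or.inl (classify_cedge hn hC hmono hr hne hrc v _ heI.2 heC hic)
      · exact absurd ⟨x, hAdj, hic, heC⟩ hch
  obtain ⟨E1, E2, hsub⟩ := hsub
  refine (Set.ncard_le_ncard hsub (Set.toFinite _)).trans ?_
  refine (Set.ncard_insert_le E1 {E2}).trans ?_
  simp

lemma drum_exists (hcov : MatchingCovered G) (v : ZMod (2*n))
    (e₁ e₂ : Sym2 (ZMod (2*n))) (h₁ : e₁ ∈ G.incidenceSet v) (h₂ : e₂ ∈ G.incidenceSet v)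
    (hne12 : e₁ ≠ e₂) (hc1 : c e₁ = col) (hc2 : c e₂ = col) :
    ∃ u u' : ZMod (2 * n), s(u, u') ∈ G.edgeSet ∧ s(u + 1, u' + 1) ∈ G.edgeSet ∧
      IsDrum n (s(u, u')) (s(u + 1, u' + 1)) ∧
      e₁ ∈ ({s(u, u'), s(u + 1, u' + 1), s(u, u + 1), s(u', u' + 1)} :
        Set (Sym2 (ZMod (2 * n)))) ∧
      e₂ ∈ ({s(u, u'), s(u + 1, u' + 1), s(u, u + 1), s(u', u' + 1)} :
        Set (Sym2 (ZMod (2 * n)))) ∧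
      ∀ f ∈ ({s(u, u'), s(u + 1, u' + 1), s(u, u + 1), s(u', u' + 1)} :
        Set (Sym2 (ZMod (2 * n)))), c f = col := by
  obtain ⟨x₁, rfl, hA1⟩ := inc_rep h₁
  obtain ⟨x₂, rfl, hA2⟩ := inc_rep h₂
  by_cases hC1 : IsCEdge n s(v,x₁) <;> by_cases hC2 : IsCEdge n s(v,x₂)
  · exact absurd ((classify_cedge hn hC hmono hr hne hrc v _ h₁.2 hc1 hC1).trans
      (classify_cedge hn hC hmono hr hne hrc v _ h₂.2 hc2 hC2).symm) hne12
  · obtain ⟨u, u', g1, g2, g3, g4, g5, g6⟩ :=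
      drum_core hn hC hmono hr hne hrc hcov v x₂ hA2 hC2 hc2
    have he1 : s(v,x₁) = cce r v :=
      classify_cedge hn hC hmono hr hne hrc v _ h₁.2 hc1 hC1
    exact ⟨u, u', g1, g2, g3, by rw [he1]; exact g5, g4, g6⟩
  · obtain ⟨u, u', g1, g2, g3, g4, g5, g6⟩ :=
      drum_core hn hC hmono hr hne hrc hcov v x₁ hA1 hC1 hc1
    have he2 : s(v,x₂) = cce r v :=
      classify_cedge hn hC hmono hr hne hrc v _ h₂.2 hc2 hC2
    exact ⟨u, u', g1, g2, g3, g4, by rw [he2]; exact g5, g6⟩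
  · have := chord_unique hn hC hmono hr hne hrc hcov v x₁ x₂ hA1 hA2 hC1 hC2 hc1 hc2
    exact absurd (by rw [this]) hne12

end Colour
end PM7


theorem statement_7 (n : ℕ) (G : SimpleGraph (ZMod (2 * n)))
    (c : Sym2 (ZMod (2 * n)) → ℕ) (h : CondStar n G c) (v : ZMod (2 * n)) :
    {e ∈ G.incidenceSet v | c e = 1}.ncard ≤ 2 ∧
    {e ∈ G.incidenceSet v | c e = 2}.ncard ≤ 2 ∧
    ∀ col ∈ ({1, 2} : Set ℕ), ∀ e₁ e₂ : Sym2 (ZMod (2 * n)),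
      e₁ ∈ G.incidenceSet v → e₂ ∈ G.incidenceSet v → e₁ ≠ e₂ →
      c e₁ = col → c e₂ = col →
      ∃ u u' : ZMod (2 * n), s(u, u') ∈ G.edgeSet ∧ s(u + 1, u' + 1) ∈ G.edgeSet ∧
        IsDrum n (s(u, u')) (s(u + 1, u' + 1)) ∧
        e₁ ∈ ({s(u, u'), s(u + 1, u' + 1), s(u, u + 1), s(u', u' + 1)} :
          Set (Sym2 (ZMod (2 * n)))) ∧
        e₂ ∈ ({s(u, u'), s(u + 1, u' + 1), s(u, u + 1), s(u', u' + 1)} :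
          Set (Sym2 (ZMod (2 * n)))) ∧
        ∀ f ∈ ({s(u, u'), s(u + 1, u' + 1), s(u, u + 1), s(u', u' + 1)} :
          Set (Sym2 (ZMod (2 * n)))), c f = col := by
  obtain ⟨hn, hCadj, hcov, hval, hcs⟩ := h
  have hmono := hval.2.1
  have hrc1 : ∀ i : ZMod (2*n), c s(i,i+1) = if i.val % 2 = 1 then 1 else 2 := hcs
  have hrc2 : ∀ i : ZMod (2*n), c s(i,i+1) = if i.val % 2 = 0 then 2 else 1 := by
    intro i
    rw [hcs i]
    rcases Nat.mod_two_eq_zero_or_one i.val with hh | hh <;> simp [hh]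
  refine ⟨?_, ?_, ?_⟩
  · exact PM7.ncard_le_two hn hCadj hmono (le_refl 1) (by omega) hrc1 hcov v
  · exact PM7.ncard_le_two hn hCadj hmono (by omega) (by omega) hrc2 hcov v
  · intro col hcol e₁ e₂ h₁ h₂ hne12 hc1 hc2
    simp only [Set.mem_insert_iff, Set.mem_singleton_iff] at hcol
    rcases hcol with rfl | rfl
    · exact PM7.drum_exists hn hCadj hmono (le_refl 1) (by omega) hrc1 hcov v e₁ e₂ h₁ h₂ hne12 hc1 hc2
    · exact PM7.drum_exists hn hCadj hmono (by omega) (by omega) hrc2 hcov v e₁ e₂ h₁ h₂ hne12 hc1 hc2
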